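/- Let a > 0 be a real constant and let p : ℝ → ℝ be a twice continuously differentiable 2π-periodic function satisfying p''(x)/(1+p'(x)²)^{3/2} + a·p(x) = 0 for every x ∈ ℝ and p(0) = 0. Then p is odd: p(−x) = −p(x) for all x ∈ ℝ. In particular ∫ from −π to π of p(x) dx = 0. -/

import Mathlib

open Set Real

private lemma aux_lipschitz {f : ℝ × ℝ → ℝ × ℝ} (hf : ContDiff ℝ 1 f) (R : ℝ) :
    ∃ K : NNReal, LipschitzOnWith K f (Metric.closedBall 0 R) := by
  obtain ⟨C, hC⟩ := (isCompact_closedBall (0 : ℝ × ℝ) R).exists_bound_of_continuousOn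
    ((hf.continuous_fderiv one_ne_zero).continuousOn)
  refine ⟨C.toNNReal, Convex.lipschitzOnWith_of_nnnorm_hasFDerivWithin_le
    (f' := fderiv ℝ f)
    (fun x _ => ((hf.differentiable one_ne_zero) x).hasFDerivAt.hasFDerivWithinAt) ?_
    (convex_closedBall _ _)⟩
  intro x hx
  rw [← NNReal.coe_le_coe, coe_nnnorm, Real.coe_toNNReal']
  exact le_max_of_le_left (hC x hx)

private lemma aux_periodic_bound {f : ℝ → ℝ} (hf : Continuous f)
    (hp : Function.Periodic f (2 * Real.pi)) : ∃ M : ℝ, ∀ x, |f x| ≤ M := by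
  obtain ⟨C, hC⟩ := (isCompact_Icc (a := (0:ℝ)) (b := 2 * Real.pi)).exists_bound_of_continuousOn
    hf.continuousOn
  refine ⟨C, fun x => ?_⟩
  obtain ⟨y, hy, hxy⟩ := hp.exists_mem_Ico₀ (by positivity) x
  rw [hxy, ← Real.norm_eq_abs]
  exact hC y ⟨hy.1, hy.2.le⟩


/-- Symmetry of periodic solutions of the capillarity equation: a `2π`-periodic `C²`
solution of `κ(p) + a·p = 0` with `a > 0` and `p(0) = 0` is odd, and in particular
has zero integral mean over `[−π, π]`. -/
theorem stmt_17 (a : ℝ) (ha : 0 < a)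
    (p : ℝ → ℝ) (hreg : ContDiff ℝ 2 p)
    (hper : ∀ x : ℝ, p (x + 2 * Real.pi) = p x)
    (heq : ∀ x : ℝ,
      deriv (deriv p) x / (1 + deriv p x ^ 2) ^ ((3 : ℝ) / 2) + a * p x = 0)
    (h0 : p 0 = 0) :
    (∀ x : ℝ, p (-x) = -p x) ∧ ∫ x in (-Real.pi)..Real.pi, p x = 0 := by
  have h2 : ContDiff ℝ ((1 : ℕ) + 1) p := by exact_mod_cast hreg
  have hp1 : Differentiable ℝ p := hreg.differentiable (by norm_num)
  have hdp : ContDiff ℝ 1 (deriv p) := (contDiff_succ_iff_deriv.mp h2).2.2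
  have hp2 : Differentiable ℝ (deriv p) := hdp.differentiable one_ne_zero
  -- second derivative formula
  have hpp : ∀ x, deriv (deriv p) x = -(a * p x) * (1 + deriv p x ^ 2) ^ ((3:ℝ)/2) := by
    intro x
    have hB : (0:ℝ) < (1 + deriv p x ^ 2) ^ ((3:ℝ)/2) :=
      Real.rpow_pos_of_pos (by positivity) _
    have h := heq x
    have h' : deriv (deriv p) x / (1 + deriv p x ^ 2) ^ ((3:ℝ)/2) = -(a * p x) := by linarith
    rw [div_eq_iff hB.ne'] at h'
    exact h'
  -- periodicity and bounds
  have hperp : Function.Periodic p (2 * Real.pi) := hper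
  have hperd : Function.Periodic (deriv p) (2 * Real.pi) := by
    intro x
    have : (fun y => p (y + 2 * Real.pi)) = p := funext hper
    rw [← deriv_comp_add_const, this]
  obtain ⟨M₁, hM₁⟩ := aux_periodic_bound hreg.continuous hperp
  obtain ⟨M₂, hM₂⟩ := aux_periodic_bound hdp.continuous hperd
  set M : ℝ := max M₁ M₂ with hM
  have hbnd : ∀ x, |p x| ≤ M ∧ |deriv p x| ≤ M := fun x =>
    ⟨(hM₁ x).trans (le_max_left _ _), (hM₂ x).trans (le_max_right _ _)⟩
  -- the vector field
  set v : ℝ × ℝ → ℝ × ℝ := fun y => (y.2, -(a * y.1) * (1 + y.2 ^ 2) ^ ((3:ℝ)/2)) with hv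
  have hvreg : ContDiff ℝ 1 v := by
    apply ContDiff.prodMk contDiff_snd
    exact ((contDiff_const.mul contDiff_fst).neg.mul
      ((contDiff_const.add (contDiff_snd.pow 2)).rpow_const_of_ne (fun y => by positivity)))
  obtain ⟨K, hK⟩ := aux_lipschitz hvreg M
  -- the two solutions
  set F : ℝ → ℝ × ℝ := fun x => (p x, deriv p x) with hF
  set G : ℝ → ℝ × ℝ := fun x => (-p (-x), deriv p (-x)) with hG
  have hF' : ∀ x, HasDerivAt F (v (F x)) x := by
    intro x
    have h := ((hp1 x).hasDerivAt).prodMk ((hp2 x).hasDerivAt)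
    simpa [hF, hv, hpp x] using h
  have hG' : ∀ x, HasDerivAt G (v (G x)) x := by
    intro x
    have h1 : HasDerivAt (fun y : ℝ => p (-y)) (deriv p (-x) * (-1)) x :=
      ((hp1 (-x)).hasDerivAt).comp x (hasDerivAt_neg x)
    have h1n : HasDerivAt (fun y : ℝ => -p (-y)) (deriv p (-x)) x := by
      have := h1.neg; simp only [mul_neg, mul_one, neg_neg] at this; exact this
    have h2 : HasDerivAt (fun y : ℝ => deriv p (-y)) (deriv (deriv p) (-x) * (-1)) x :=
      ((hp2 (-x)).hasDerivAt).comp x (hasDerivAt_neg x)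
    have h := h1n.prodMk h2
    have hval : (deriv p (-x), deriv (deriv p) (-x) * (-1)) = v (G x) := by
      simp only [hv, hG, hpp (-x)]
      exact Prod.ext rfl (by ring)
    rwa [hval] at h
  have hFs : ∀ x : ℝ, F x ∈ Metric.closedBall (0 : ℝ × ℝ) M := by
    intro x
    rw [Metric.mem_closedBall, dist_zero_right, Prod.norm_def]
    exact max_le (by simpa [Real.norm_eq_abs] using (hbnd x).1)
      (by simpa [Real.norm_eq_abs] using (hbnd x).2)
  have hGs : ∀ x : ℝ, G x ∈ Metric.closedBall (0 : ℝ × ℝ) M := by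
    intro x
    rw [Metric.mem_closedBall, dist_zero_right, Prod.norm_def]
    refine max_le ?_ (by simpa [Real.norm_eq_abs] using (hbnd (-x)).2)
    simpa [hG, Real.norm_eq_abs, abs_neg] using (hbnd (-x)).1
  have h00 : F 0 = G 0 := by simp [hF, hG, h0]
  -- uniqueness
  have hodd : ∀ x : ℝ, p (-x) = -p x := by
    intro x
    have hx0 : (0 : ℝ) ∈ Ioo (-(|x| + 1)) (|x| + 1) := by
      constructor <;> nlinarith [abs_nonneg x]
    have hxI : x ∈ Icc (-(|x| + 1)) (|x| + 1) := by
      constructor <;> nlinarith [abs_nonneg x, neg_abs_le x, le_abs_self x]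
    have hFG := ODE_solution_unique_of_mem_Icc
      (v := fun _ : ℝ => v) (s := fun _ : ℝ => Metric.closedBall (0 : ℝ × ℝ) M)
      (fun _ _ => hK) hx0
      (fun t _ => (hF' t).continuousAt.continuousWithinAt)
      (fun t _ => hF' t) (fun t _ => hFs t)
      (fun t _ => (hG' t).continuousAt.continuousWithinAt)
      (fun t _ => hG' t) (fun t _ => hGs t) h00
    have := hFG hxI
    have h1 : p x = -p (-x) := congrArg Prod.fst this
    linarith
  refine ⟨hodd, ?_⟩
  -- integral
  have hint : IntervalIntegrable p MeasureTheory.volume (-Real.pi) 0 :=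
    hreg.continuous.intervalIntegrable _ _
  have hint2 : IntervalIntegrable p MeasureTheory.volume 0 Real.pi :=
    hreg.continuous.intervalIntegrable _ _
  have hneg : ∫ x in (0:ℝ)..Real.pi, p (-x) = ∫ x in (-Real.pi)..(0:ℝ), p x := by
    simpa using intervalIntegral.integral_comp_neg (a := (0:ℝ)) (b := Real.pi) (f := p)
  have hneg' : ∫ x in (0:ℝ)..Real.pi, p (-x) = -∫ x in (0:ℝ)..Real.pi, p x := by
    simp_rw [hodd]
    exact intervalIntegral.integral_neg
  rw [← intervalIntegral.integral_add_adjacent_intervals hint hint2, ← hneg, hneg']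
  ring
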